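/- arXiv:2208.11872 — 2 statements merged into one kernel-verified Lean document; each statement's English description precedes it below -/
import Mathlib

section
/- Let $I \subset [0,1]$ and let $D(I) = \{ (m-1+f)/m \mid m \in \mathbb{Z}_{>0},\ f \in I_+ \}$. Then $I$ satisfies the DCC if and only if $D(I)$ satisfies the DCC. -/
def SatisfiesDCC (S : Set ℝ) : Prop :=
  ¬ ∃ f : ℕ → ℝ, (∀ n, f n ∈ S) ∧ ∀ n, f (n + 1) < f n

def SatisfiesACC (S : Set ℝ) : Prop :=
  ¬ ∃ f : ℕ → ℝ, (∀ n, f n ∈ S) ∧ ∀ n, f n < f (n + 1)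

def IPlus (I : Set ℝ) : Set ℝ :=
  {0} ∪ {j | j ∈ Set.Icc (0 : ℝ) 1 ∧
    ∃ l : List ℝ, l ≠ [] ∧ (∀ x ∈ l, x ∈ I) ∧ l.sum = j}

def DSet (I : Set ℝ) : Set ℝ :=
  {a | ∃ m : ℕ, 0 < m ∧ ∃ f ∈ IPlus I, a = (m - 1 + f) / m}

lemma dcc_iff_isWF (S : Set ℝ) : SatisfiesDCC S ↔ S.IsWF := by
  rw [Set.isWF_iff_no_descending_seq]
  constructor
  · intro h f hf hmem
    exact h ⟨f, hmem, fun n => hf (Nat.lt_succ_self n)⟩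
  · rintro h ⟨f, hmem, hdec⟩
    exact h f (strictAnti_nat_of_succ_lt hdec) hmem

lemma iplus_mem_Icc (I : Set ℝ) : ∀ x ∈ IPlus I, x ∈ Set.Icc (0:ℝ) 1 := by
  rintro x (rfl | ⟨hx, -⟩)
  · exact ⟨le_refl _, zero_le_one⟩
  · exact hx

lemma iplus_isPWO (I : Set ℝ) (hI : I ⊆ Set.Icc 0 1) (hWF : I.IsWF) :
    (IPlus I).IsPWO := by
  have hclos : Set.IsPWO (AddSubmonoid.closure I : Set ℝ) :=
    (hWF.isPWO).addSubmonoid_closure (fun x hx => (hI hx).1)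
  apply hclos.mono
  rintro x (rfl | ⟨-, l, -, hl, rfl⟩)
  · exact zero_mem _
  · exact AddSubmonoid.list_sum_mem _ (fun y hy => AddSubmonoid.subset_closure (hl y hy))

theorem dcc_iff_dcc_DSet (I : Set ℝ) (hI : I ⊆ Set.Icc 0 1) :
    SatisfiesDCC I ↔ SatisfiesDCC (DSet I) := by
  rw [dcc_iff_isWF, dcc_iff_isWF]
  constructor
  · intro hWF
    have hIP : (IPlus I).IsPWO := iplus_isPWO I hI hWF
    rw [Set.isWF_iff_no_descending_seq]
    intro a ha hmem
    choose m hm f hfI hEq0 using hmem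
    have hEq : ∀ n : ℕ, a n = ((m n : ℝ) - 1 + f n) / (m n) := hEq0
    -- basic bounds
    have hmpos : ∀ n, (0:ℝ) < m n := fun n => by exact_mod_cast hm n
    have hf01 : ∀ n, f n ∈ Set.Icc (0:ℝ) 1 := fun n => iplus_mem_Icc I _ (hfI n)
    have hle1 : ∀ n, a n ≤ 1 := by
      intro n
      rw [hEq n, div_le_one (hmpos n)]
      linarith [(hf01 n).2]
    have hlow : ∀ n, 1 - 1 / (m n) ≤ a n := by
      intro n
      rw [hEq n, le_div_iff₀ (hmpos n)]
      have := (hf01 n).1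
      have hne : (m n : ℝ) ≠ 0 := ne_of_gt (hmpos n)
      have h1 : (1 - 1 / (m n : ℝ)) * (m n : ℝ) = (m n : ℝ) - 1 := by
        field_simp
      rw [h1]; linarith
    have hε : 0 < 1 - a 1 := by
      have := ha (Nat.lt_succ_self 0)
      have := hle1 0
      linarith
    set ε := 1 - a 1 with hεdef
    have hbound : ∀ n, (m (n+1) : ℝ) ≤ 1 / ε := by
      intro n
      have h1 : a (n+1) ≤ a 1 := ha.antitone (Nat.succ_le_succ (Nat.zero_le n))
      have h2 : 1 - 1 / (m (n+1)) ≤ 1 - ε := by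
        have := hlow (n+1); linarith
      have h3 : ε ≤ 1 / (m (n+1)) := by linarith
      rw [le_div_iff₀ (hmpos (n+1))] at h3
      rw [le_div_iff₀ hε]
      linarith
    set M : ℕ := ⌈1/ε⌉₊ with hM
    have hmM : ∀ n, m (n+1) ≤ M := by
      intro n
      have : (m (n+1) : ℝ) ≤ (M : ℝ) := le_trans (hbound n) (Nat.le_ceil _)
      exact_mod_cast this
    set T : Set ℝ :=
      (Finset.Icc 1 M).sup (fun k => (fun x : ℝ => ((k:ℝ) - 1 + x)/k) '' IPlus I) with hT
    have hTWF : T.IsWF := by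
      rw [hT, Finset.isWF_sup]
      intro k hk
      have hkpos : (0:ℝ) < k := by
        have := (Finset.mem_Icc.mp hk).1
        exact_mod_cast Nat.lt_of_lt_of_le Nat.zero_lt_one this
      refine (hIP.image_of_monotone ?_).isWF
      intro x y hxy
      simp only
      exact (div_le_div_iff_of_pos_right hkpos).mpr (by linarith)
    have hmemT : ∀ n, a (n+1) ∈ T := by
      intro n
      rw [hT, Finset.sup_set_eq_biUnion]
      refine Set.mem_biUnion (Finset.mem_Icc.mpr ⟨hm (n+1), hmM n⟩) ?_
      exact ⟨f (n+1), hfI (n+1), (hEq (n+1)).symm⟩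
    have hanti : StrictAnti (fun n => a (n+1)) := fun i j hij => ha (Nat.succ_lt_succ hij)
    exact (Set.isWF_iff_no_descending_seq.mp hTWF) _ hanti hmemT
  · intro hWF
    apply hWF.mono
    intro x hx
    refine ⟨1, Nat.one_pos, x, Or.inr ⟨hI hx, [x], by simp, ?_, by simp⟩, by norm_num⟩
    intro y hy
    simp at hy; rw [hy]; exact hx
end

section
/- Fix a finite set $K_0 \subset [0,1]$, a set $K \subset [0,1]$ satisfying the DCC, and a set $J$ of positive reals satisfying the DCC. Suppose $(c_i)_{i \in \mathbb{N}}$ is a nondecreasing sequence of positive reals and $(\alpha_i)$ is a sequence in $J$ such that for each $i$ there exist positive integers $m_i, k_i$ and $f_i \in K_+$ with $(m_i - 1 + f_i + k_i c_i \alpha_i)/m_i \in K_0$. Then the sequence $(c_i)$ is eventually constant. -/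
lemma dcc_isWF {S : Set ℝ} (h : SatisfiesDCC S) : S.IsWF := by
  rw [Set.isWF_iff_no_descending_seq]
  intro f hf hmem
  exact h ⟨f, hmem, fun n => hf (Nat.lt_succ_self n)⟩

open Pointwise

def sumsLe (n : ℕ) (K : Set ℝ) : Set ℝ :=
  {x | ∃ l : List ℝ, l.length ≤ n ∧ (∀ a ∈ l, a ∈ K) ∧ l.sum = x}

lemma sumsLe_isPWO {K : Set ℝ} (hK : K.IsPWO) : ∀ n, (sumsLe n K).IsPWO := by
  intro n
  induction n with
  | zero =>
    apply Set.IsPWO.mono (Set.finite_singleton (0:ℝ)).isPWO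
    rintro x ⟨l, hlen, -, hsum⟩
    have : l = [] := List.eq_nil_of_length_eq_zero (Nat.le_zero.mp hlen)
    simp [this] at hsum
    simp [← hsum]
  | succ n ih =>
    have hsub : sumsLe (n+1) K ⊆ sumsLe n K ∪ (K + sumsLe n K) := by
      rintro x ⟨l, hlen, hmem, hsum⟩
      match l with
      | [] =>
        left; exact ⟨[], by simp, by simp, hsum⟩
      | a :: l' =>
        right
        have h1 : a ∈ K := hmem a (by simp)
        have h2 : l'.sum ∈ sumsLe n K :=
          ⟨l', by simpa using hlen, fun b hb => hmem b (by simp [hb]), rfl⟩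
        have := Set.add_mem_add h1 h2
        rwa [show a + l'.sum = x by simpa using hsum] at this
    exact (ih.union (hK.add ih)).mono hsub

lemma IPlus_isWF {K : Set ℝ} (hK : K ⊆ Set.Icc 0 1) (hwf : K.IsWF) : (IPlus K).IsWF := by
  have drop : ∀ l : List ℝ, (∀ x ∈ l, x ∈ K) → ∃ l' : List ℝ,
      (∀ x ∈ l', x ∈ K ∩ Set.Ioi 0) ∧ l'.sum = l.sum := by
    intro l hl
    induction l with
    | nil => exact ⟨[], by simp, rfl⟩
    | cons a l ih =>
      obtain ⟨l', h1, h2⟩ := ih (fun x hx => hl x (List.mem_cons_of_mem _ hx))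
      have haK : a ∈ K := hl a List.mem_cons_self
      by_cases hpos : 0 < a
      · refine ⟨a :: l', ?_, by simp [h2]⟩
        rintro x hx
        rcases List.mem_cons.mp hx with rfl | hx
        · exact ⟨haK, hpos⟩
        · exact h1 x hx
      · have ha0 : a = 0 := le_antisymm (not_lt.mp hpos) (hK haK).1
        exact ⟨l', h1, by simp [ha0, h2]⟩
  set K' := K ∩ Set.Ioi 0 with hK'
  by_cases hne : K'.Nonempty
  · have hK'wf : K'.IsWF := hwf.mono Set.inter_subset_left
    set ε := hK'wf.min hne with hεdef
    have hεpos : 0 < ε := (hK'wf.min_mem hne).2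
    set N := ⌈ε⁻¹⌉₊ with hN
    have hsub : IPlus K ⊆ {0} ∪ sumsLe N K' := by
      rintro j (hj | ⟨hj, l, -, hlK, hls⟩)
      · exact Or.inl hj
      right
      obtain ⟨l', h1, h2⟩ := drop l hlK
      have hsum : l'.sum = j := h2.trans hls
      refine ⟨l', ?_, h1, hsum⟩
      have hle : l'.length • ε ≤ l'.sum :=
        List.card_nsmul_le_sum l' ε (fun x hx => hK'wf.min_le hne (h1 x hx))
      have hle1 : (l'.length : ℝ) * ε ≤ 1 := by
        rw [← nsmul_eq_mul]
        exact hle.trans (hsum ▸ hj.2)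
      have hle2 : (l'.length : ℝ) ≤ ε⁻¹ := by
        rw [← one_div, le_div_iff₀ hεpos]
        exact hle1
      have := hle2.trans (Nat.le_ceil ε⁻¹)
      exact_mod_cast this
    exact (((Set.finite_singleton 0).isWF).union (sumsLe_isPWO hK'wf.isPWO N).isWF).mono hsub
  · have hsub : IPlus K ⊆ {0} := by
      rintro j (hj | ⟨hj, l, -, hlK, hls⟩)
      · exact hj
      obtain ⟨l', h1, h2⟩ := drop l hlK
      cases l' with
      | nil => simp at h2; simp [← hls, ← h2]
      | cons a tl => exact absurd ⟨a, h1 a (by simp)⟩ hne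
    exact (Set.finite_singleton 0).isWF.mono hsub

theorem eventually_constant_of_lct_data (K₀ K J : Set ℝ)
    (hfin : K₀.Finite) (hK₀ : K₀ ⊆ Set.Icc 0 1)
    (hK : K ⊆ Set.Icc 0 1) (hKdcc : SatisfiesDCC K)
    (hJ : J ⊆ Set.Ioi 0) (hJdcc : SatisfiesDCC J)
    (c : ℕ → ℝ) (hc : Monotone c) (hcpos : ∀ i, 0 < c i)
    (α : ℕ → ℝ) (hα : ∀ i, α i ∈ J)
    (h : ∀ i, ∃ m k : ℕ, 0 < m ∧ 0 < k ∧
      ∃ f ∈ IPlus K, (m - 1 + f + k * (c i * α i)) / m ∈ K₀) :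
    ∃ N, ∀ n, N ≤ n → c n = c N := by
  by_contra hcon
  push_neg at hcon
  choose m k hm hk f hfK hmem using h
  have hJwf : J.IsWF := dcc_isWF hJdcc
  have hJne : J.Nonempty := ⟨α 0, hα 0⟩
  set δ := hJwf.min hJne with hδdef
  have hδpos : 0 < δ := hJ (hJwf.min_mem hJne)
  have hδle : ∀ i, δ ≤ α i := fun i => hJwf.min_le hJne (hα i)
  have hαpos : ∀ i, 0 < α i := fun i => hJ (hα i)
  have hf01 : ∀ i, 0 ≤ f i ∧ f i ≤ 1 := by
    intro i
    rcases hfK i with h0 | ⟨hIcc, -⟩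
    · simp only [Set.mem_singleton_iff] at h0
      simp [h0]
    · exact ⟨hIcc.1, hIcc.2⟩
  set y : ℕ → ℝ := fun i => (k i : ℝ) * (c i * α i) with hy
  have hkpos : ∀ i, (0:ℝ) < k i := fun i => by exact_mod_cast hk i
  have hmpos : ∀ i, (0:ℝ) < m i := fun i => by exact_mod_cast hm i
  have hypos : ∀ i, 0 < y i := fun i => mul_pos (hkpos i) (mul_pos (hcpos i) (hαpos i))
  set t : ℕ → ℝ := fun i => f i + y i with ht
  have htdef : ∀ i, t i = f i + y i := fun _ => rfl
  have hydef : ∀ i, y i = (k i : ℝ) * (c i * α i) := fun _ => rfl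
  set κ : ℕ → ℝ := fun i => ((m i : ℝ) - 1 + f i + (k i : ℝ) * (c i * α i)) / (m i) with hκ
  have hκK₀ : ∀ i, κ i ∈ K₀ := hmem
  have hrel : ∀ i, t i = 1 - (m i : ℝ) * (1 - κ i) := by
    intro i
    have h1 : κ i * (m i : ℝ) = (m i:ℝ) - 1 + f i + (k i : ℝ) * (c i * α i) :=
      div_mul_cancel₀ _ (ne_of_gt (hmpos i))
    have h2 : (m i:ℝ) * (1 - κ i) = (m i:ℝ) - κ i * (m i : ℝ) := by ring
    simp only [ht, hy]
    linarith
  have hκ01 : ∀ i, κ i ∈ Set.Icc (0:ℝ) 1 := fun i => hK₀ (hκK₀ i)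
  have htpos : ∀ i, 0 < t i := fun i => add_pos_of_nonneg_of_pos (hf01 i).1 (hypos i)
  have hyle1 : ∀ i, y i ≤ 1 := by
    intro i
    have h1 := hrel i
    nlinarith [(hκ01 i).2, hmpos i, (hf01 i).1, htdef i, hypos i,
      mul_nonneg (hmpos i).le (sub_nonneg.mpr (hκ01 i).2)]
  set B := ⌈(c 0 * δ)⁻¹⌉₊ with hB
  have hcδpos : 0 < c 0 * δ := mul_pos (hcpos 0) hδpos
  have hkB : ∀ i, k i ≤ B := by
    intro i
    have hca : c 0 * δ ≤ c i * α i :=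
      mul_le_mul (hc (Nat.zero_le i)) (hδle i) hδpos.le (hcpos i).le
    have h1 : (k i : ℝ) * (c 0 * δ) ≤ y i := by
      rw [hydef i]
      exact mul_le_mul_of_nonneg_left hca (hkpos i).le
    have h2 : (k i : ℝ) ≤ (c 0 * δ)⁻¹ := by
      rw [← one_div, le_div_iff₀ hcδpos]
      exact h1.trans (hyle1 i)
    have h3 := h2.trans (Nat.le_ceil (c 0 * δ)⁻¹)
    exact_mod_cast h3
  set E := insert (1:ℝ) ((fun x => 1 - x) '' (K₀ ∩ Set.Iio 1)) with hE
  have hEfin : E.Finite := ((hfin.inter_of_left _).image _).insert 1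
  have hEne : E.Nonempty := ⟨1, Set.mem_insert _ _⟩
  set ε₀ := hEfin.isWF.min hEne with hε₀def
  have hε₀pos : 0 < ε₀ := by
    have hmm := hEfin.isWF.min_mem hEne
    rcases Set.mem_insert_iff.mp hmm with h1 | ⟨x, ⟨-, hx2⟩, hx3⟩
    · rw [hε₀def, h1]; norm_num
    · rw [hε₀def, ← hx3]
      have hb : (fun x => 1 - x) x = 1 - x := rfl
      rw [hb]
      simp only [Set.mem_Iio] at hx2
      linarith
  set M := ⌈ε₀⁻¹⌉₊ with hM
  set T := {(1:ℝ)} ∪ (fun p : ℕ × ℝ => 1 - (p.1:ℝ) * (1 - p.2)) '' ((Set.Icc 1 M) ×ˢ K₀) with hT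
  have hTfin : T.Finite :=
    (Set.finite_singleton 1).union (((Set.finite_Icc 1 M).prod hfin).image _)
  have htT : ∀ i, t i ∈ T := by
    intro i
    by_cases hκ1 : κ i = 1
    · left
      exact Set.mem_singleton_iff.mpr (by rw [hrel i, hκ1]; ring)
    · right
      have hκlt : κ i < 1 := lt_of_le_of_ne (hκ01 i).2 hκ1
      have hεle : ε₀ ≤ 1 - κ i :=
        hEfin.isWF.min_le hEne (Set.mem_insert_iff.mpr (Or.inr ⟨κ i, ⟨hκK₀ i, hκlt⟩, rfl⟩))
      have hmM : m i ≤ M := by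
        have h1 : (m i:ℝ) * ε₀ < 1 := by
          nlinarith [hrel i, htpos i, hmpos i,
            mul_le_mul_of_nonneg_left hεle (hmpos i).le]
        have h2 : (m i:ℝ) < ε₀⁻¹ := by
          rw [← one_div, lt_div_iff₀ hε₀pos]
          exact h1
        have h3 : (m i : ℝ) < (M : ℝ) := h2.trans_le (Nat.le_ceil ε₀⁻¹)
        exact (Nat.cast_lt.mp h3).le
      exact ⟨(m i, κ i), ⟨⟨hm i, hmM⟩, hκK₀ i⟩, (hrel i).symm⟩
  haveI : Finite ↥T := hTfin.to_subtype
  set g : ℕ → Fin (B+1) × ↥T := fun i => (⟨k i, Nat.lt_succ_of_le (hkB i)⟩, ⟨t i, htT i⟩) with hg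
  obtain ⟨p, hp⟩ := Finite.exists_infinite_fiber g
  set S := g ⁻¹' {p} with hS
  have hSinf : S.Infinite := Set.infinite_coe_iff.mp hp
  have hstep : ∀ s : ↥S, ∃ s' : ↥S, c s < c s' := by
    rintro ⟨s, hs⟩
    obtain ⟨n, hn1, hn2⟩ := hcon s
    obtain ⟨b, hbS, hbn⟩ := hSinf.exists_gt n
    exact ⟨⟨b, hbS⟩, lt_of_lt_of_le (lt_of_le_of_ne (hc hn1) (Ne.symm hn2)) (hc hbn.le)⟩
  haveI hSne : Nonempty ↥S := @Infinite.nonempty _ hp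
  choose nxt hnxt using hstep
  set seq : ℕ → ↥S := fun j => nxt^[j] (Classical.arbitrary ↥S) with hseqdef
  have hcmono : StrictMono (fun j => c (seq j)) := by
    apply strictMono_nat_of_lt_succ
    intro j
    have hit : seq (j+1) = nxt (seq j) := Function.iterate_succ_apply' _ _ _
    rw [hit]
    exact hnxt (seq j)
  obtain ⟨φ, hαmono⟩ :=
    hJwf.isPWO.exists_monotone_subseq (f := fun j => α ((seq j : ℕ))) (fun j => hα _)
  have hφmono : StrictMono φ := φ.strictMono
  set ψ : ℕ → ℕ := fun j => ((seq (φ j)) : ℕ) with hψ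
  have hψS : ∀ j, g (ψ j) = p := fun j => (seq (φ j)).2
  have hkconst : ∀ j, k (ψ j) = k (ψ 0) := by
    intro j
    have h1 : g (ψ j) = g (ψ 0) := (hψS j).trans (hψS 0).symm
    have := congrArg (fun q => (q.1 : Fin (B+1)).val) h1
    simpa [hg] using this
  have htconst : ∀ j, t (ψ j) = t (ψ 0) := by
    intro j
    have h1 : g (ψ j) = g (ψ 0) := (hψS j).trans (hψS 0).symm
    have := congrArg (fun q => ((q.2 : ↥T) : ℝ)) h1
    simpa [hg] using this
  have hymono : ∀ j, y (ψ j) < y (ψ (j+1)) := by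
    intro j
    have hcj : c (ψ j) < c (ψ (j+1)) := hcmono (hφmono (Nat.lt_succ_self j))
    have hαj : α (ψ j) ≤ α (ψ (j+1)) := hαmono (Nat.le_succ j)
    have hcα : c (ψ j) * α (ψ j) < c (ψ (j+1)) * α (ψ (j+1)) := by
      nlinarith [hαpos (ψ j), hαpos (ψ (j+1)), hcpos (ψ j)]
    have hkk : (k (ψ (j+1)) : ℝ) = (k (ψ j) : ℝ) := by
      rw [hkconst (j+1), hkconst j]
    simp only [hy]
    rw [hkk]
    exact mul_lt_mul_of_pos_left hcα (hkpos (ψ j))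
  have hfdec : ∀ j, f (ψ (j+1)) < f (ψ j) := by
    intro j
    have e1 : f (ψ j) + y (ψ j) = f (ψ (j+1)) + y (ψ (j+1)) := by
      have := (htconst j).trans (htconst (j+1)).symm
      simpa [ht] using this
    linarith [hymono j]
  have hWF := IPlus_isWF hK (dcc_isWF hKdcc)
  rw [Set.isWF_iff_no_descending_seq] at hWF
  exact hWF (fun j => f (ψ j)) (strictAnti_nat_of_succ_lt hfdec) (fun j => hfK _)
end
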